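/- For all α, γ, δ ∈ ℝ, the three bases {𝕀, H₂(α,0), H₃(γ,δ)} of ℂ⁴ are pairwise mutually unbiased, where H₂(α,β) = (1/2)·[[1,1,1,1],[1,1,−1,−1],[e^{iα},−e^{iα}, i·e^{iβ}, −i·e^{iβ}],[e^{iα},−e^{iα},−i·e^{iβ}, i·e^{iβ}]] and H₃(γ,δ) = (1/2)·[[1,1,1,1],[1,1,−1,−1],[−e^{iγ}, e^{iγ}, e^{iδ}, −e^{iδ}],[e^{iγ},−e^{iγ}, e^{iδ}, −e^{iδ}]], and 𝕀 denotes the computational (standard) basis. -/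

import Mathlib

open Matrix Complex

set_option maxHeartbeats 2000000

private lemma aux_unitary₂ (a : ℂ) (ha : (starRingEnd ℂ) a * a = 1) :
    ((1/2 : ℂ) • !![(1 : ℂ), 1, 1, 1;
        1, 1, -1, -1;
        a, -a, Complex.I, -Complex.I;
        a, -a, -Complex.I, Complex.I]) ∈ Matrix.unitaryGroup (Fin 4) ℂ := by
  rw [Matrix.mem_unitaryGroup_iff']
  ext i j
  fin_cases i <;> fin_cases j <;>
    simp [Matrix.mul_apply, Fin.sum_univ_four, Matrix.one_apply, star_eq_conjTranspose,
      Matrix.conjTranspose_apply, Matrix.smul_of, Matrix.smul_cons, Matrix.smul_empty,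
      Matrix.vecHead, Matrix.vecTail, smul_eq_mul, Complex.conj_ofNat] <;>
    ring_nf <;> simp [mul_comm a, ha, Complex.conj_ofNat] <;> ring_nf

private lemma aux_unitary₃ (b c : ℂ) (hb : (starRingEnd ℂ) b * b = 1)
    (hc : (starRingEnd ℂ) c * c = 1) :
    ((1/2 : ℂ) • !![(1 : ℂ), 1, 1, 1;
        1, 1, -1, -1;
        -b, b, c, -c;
        b, -b, c, -c]) ∈ Matrix.unitaryGroup (Fin 4) ℂ := by
  rw [Matrix.mem_unitaryGroup_iff']
  ext i j
  fin_cases i <;> fin_cases j <;>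
    simp [Matrix.mul_apply, Fin.sum_univ_four, Matrix.one_apply, star_eq_conjTranspose,
      Matrix.conjTranspose_apply, Matrix.smul_of, Matrix.smul_cons, Matrix.smul_empty,
      Matrix.vecHead, Matrix.vecTail, smul_eq_mul, Complex.conj_ofNat] <;>
    ring_nf <;> simp [mul_comm b, mul_comm c, hb, hc, Complex.conj_ofNat] <;> ring_nf

private lemma aux_abs₂ (a : ℂ) (na : ‖a‖ = 1) :
    ∀ j k : Fin 4, ‖(((1/2 : ℂ) • !![(1 : ℂ), 1, 1, 1;
        1, 1, -1, -1;
        a, -a, Complex.I, -Complex.I;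
        a, -a, -Complex.I, Complex.I]) j k)‖ = 1 / 2 := by
  intro j k
  fin_cases j <;> fin_cases k <;>
    simp [Matrix.smul_of, Matrix.smul_cons, Matrix.smul_empty, Matrix.vecHead, Matrix.vecTail,
      _root_.map_mul, na, Complex.norm_I] <;> norm_num

private lemma aux_abs₃ (b c : ℂ) (nb : ‖b‖ = 1) (nc : ‖c‖ = 1) :
    ∀ j k : Fin 4, ‖(((1/2 : ℂ) • !![(1 : ℂ), 1, 1, 1;
        1, 1, -1, -1;
        -b, b, c, -c;
        b, -b, c, -c]) j k)‖ = 1 / 2 := by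
  intro j k
  fin_cases j <;> fin_cases k <;>
    simp [Matrix.smul_of, Matrix.smul_cons, Matrix.smul_empty, Matrix.vecHead, Matrix.vecTail,
      _root_.map_mul, nb, nc] <;> norm_num

private lemma aux_prod (a b c : ℂ) (na : ‖a‖ = 1) (nb : ‖b‖ = 1)
    (nc : ‖c‖ = 1) :
    ∀ j k : Fin 4, ‖(((((1/2 : ℂ) • !![(1 : ℂ), 1, 1, 1;
        1, 1, -1, -1; a, -a, Complex.I, -Complex.I; a, -a, -Complex.I, Complex.I])ᴴ) *
      ((1/2 : ℂ) • !![(1 : ℂ), 1, 1, 1; 1, 1, -1, -1;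
        -b, b, c, -c; b, -b, c, -c])) j k)‖ = 1 / 2 := by
  intro j k
  fin_cases j <;> fin_cases k <;>
    simp [Matrix.mul_apply, Fin.sum_univ_four, Matrix.conjTranspose_apply,
      Matrix.smul_of, Matrix.smul_cons, Matrix.smul_empty, Matrix.vecHead, Matrix.vecTail] <;>
    ring_nf <;>
    simp [_root_.map_mul, Complex.norm_conj, na, nb, nc, Complex.norm_I, map_neg]

/-- The triplet {𝕀, H₂(α,0), H₃(γ,δ)} is a triplet of pairwise mutually
unbiased bases of ℂ⁴ for all α, γ, δ: both matrices are complex Hadamard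
matrices (so each is unbiased with the computational basis 𝕀), and
H₂(α,0)ᴴ·H₃(γ,δ) has all entries of modulus 1/2. -/
theorem stmt_9 (α γ δ : ℝ)
    (H₂ H₃ : Matrix (Fin 4) (Fin 4) ℂ)
    (hH₂ : H₂ = (1/2 : ℂ) • !![(1 : ℂ), 1, 1, 1;
        1, 1, -1, -1;
        Complex.exp (α * Complex.I), -Complex.exp (α * Complex.I),
          Complex.I, -Complex.I;
        Complex.exp (α * Complex.I), -Complex.exp (α * Complex.I),
          -Complex.I, Complex.I])
    (hH₃ : H₃ = (1/2 : ℂ) • !![(1 : ℂ), 1, 1, 1;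
        1, 1, -1, -1;
        -Complex.exp (γ * Complex.I), Complex.exp (γ * Complex.I),
          Complex.exp (δ * Complex.I), -Complex.exp (δ * Complex.I);
        Complex.exp (γ * Complex.I), -Complex.exp (γ * Complex.I),
          Complex.exp (δ * Complex.I), -Complex.exp (δ * Complex.I)]) :
    H₂ ∈ Matrix.unitaryGroup (Fin 4) ℂ ∧
    H₃ ∈ Matrix.unitaryGroup (Fin 4) ℂ ∧
    (∀ j k : Fin 4, ‖H₂ j k‖ = 1 / 2) ∧
    (∀ j k : Fin 4, ‖H₃ j k‖ = 1 / 2) ∧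
    (∀ j k : Fin 4, ‖(H₂ᴴ * H₃) j k‖ = 1 / 2) := by
  have na : ‖Complex.exp (α * Complex.I)‖ = 1 := Complex.norm_exp_ofReal_mul_I α
  have nb : ‖Complex.exp (γ * Complex.I)‖ = 1 := Complex.norm_exp_ofReal_mul_I γ
  have nc : ‖Complex.exp (δ * Complex.I)‖ = 1 := Complex.norm_exp_ofReal_mul_I δ
  have conv1 : ∀ z : ℂ, ‖z‖ = 1 → (starRingEnd ℂ) z * z = 1 := by
    intro z hz
    rw [← Complex.normSq_eq_conj_mul_self, Complex.normSq_eq_norm_sq, hz]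
    norm_num
  subst hH₂ hH₃
  exact ⟨aux_unitary₂ _ (conv1 _ na), aux_unitary₃ _ _ (conv1 _ nb) (conv1 _ nc),
    aux_abs₂ _ na, aux_abs₃ _ _ nb nc, aux_prod _ _ _ na nb nc⟩
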